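/- Let n ≥ 8 be even, j = n/2, and let i be an integer with 0 < i < j, gcd(n,i,j) = 1, and (n,i,j) ≠ (6,1,3). Then in the circulant graph C_n(i,j), for every vertex a, N(a) ∩ N(a+2i) = {a+i}. -/

import Mathlib

/-- The two-generator circulant graph `C_n(i,j)` on `ℤ/nℤ`:
distinct `a, b` are adjacent iff `a - b ∈ {i, -i, j, -j}`. -/
def circulant (n : ℕ) (i j : ZMod n) : SimpleGraph (ZMod n) where
  Adj a b := a ≠ b ∧ (a - b = i ∨ a - b = -i ∨ a - b = j ∨ a - b = -j)
  symm := by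
    constructor
    rintro a b ⟨hab, h⟩
    refine ⟨fun h' => hab h'.symm, ?_⟩
    have hba : b - a = -(a - b) := by ring
    rcases h with h | h | h | h <;> rw [hba, h] <;> simp
  loopless := by constructor; rintro a ⟨h, -⟩; exact h rfl

lemma dvd_small' (k m : ℤ) (hk : 0 < k) (hdvd : k ∣ m) (h1 : -(2*k) < m) (h2 : m < 2*k) :
    m = -k ∨ m = 0 ∨ m = k := by
  obtain ⟨c, rfl⟩ := hdvd
  have h1' : -2 < c := by nlinarith
  have h2' : c < 2 := by nlinarith
  have : c = -1 ∨ c = 0 ∨ c = 1 := by omega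
  rcases this with rfl | rfl | rfl
  · exact Or.inl (by ring)
  · exact Or.inr (Or.inl (by ring))
  · exact Or.inr (Or.inr (by ring))

lemma contra' (n : ℕ) (hn : 8 ≤ n) (m : ℤ) (hz : ((m : ℤ) : ZMod n) = 0)
    (hb1 : -(2*(n:ℤ)) < m) (hb2 : m < 2*(n:ℤ)) (hm0 : m ≠ 0) (hmk : m ≠ (n:ℤ))
    (hmk' : m ≠ -(n:ℤ)) : False := by
  have hd := (ZMod.intCast_zmod_eq_zero_iff_dvd m n).mp hz
  rcases dvd_small' (n:ℤ) m (by omega) hd hb1 hb2 with h | h | h <;> omega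

theorem stmt_12 (n i : ℕ) (hn : 8 ≤ n) (hne : Even n) (hi : 0 < i)
    (hij : i < n / 2) (hgcd : Nat.gcd n (Nat.gcd i (n / 2)) = 1)
    (hspecial : (n, i, n / 2) ≠ (6, 1, 3)) :
    ∀ a : ZMod n,
      (circulant n (i : ZMod n) ((n / 2 : ℕ) : ZMod n)).neighborSet a ∩
        (circulant n (i : ZMod n) ((n / 2 : ℕ) : ZMod n)).neighborSet (a + 2 * (i : ZMod n)) =
      {a + (i : ZMod n)} := by
  have hEv : n % 2 = 0 := Nat.even_iff.mp hne
  -- rule out 2*i = n/2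
  have hB : 2 * i ≠ n / 2 := by
    intro h
    have hg1 : Nat.gcd i (n / 2) = i := by
      rw [← h]; exact Nat.gcd_eq_left (dvd_mul_left i 2)
    have hg := hgcd
    rw [hg1] at hg
    have hdvdn : i ∣ n := ⟨4, by omega⟩
    have h1 : i ∣ Nat.gcd n i := Nat.dvd_gcd hdvdn dvd_rfl
    have : i = 1 := Nat.dvd_one.mp (hg ▸ h1)
    omega
  -- rule out 3*i = n/2
  have hA : 3 * i ≠ n / 2 := by
    intro h
    have hg1 : Nat.gcd i (n / 2) = i := by
      rw [← h]; exact Nat.gcd_eq_left (dvd_mul_left i 3)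
    have hg := hgcd
    rw [hg1] at hg
    have hdvdn : i ∣ n := ⟨6, by omega⟩
    have h1 : i ∣ Nat.gcd n i := Nat.dvd_gcd hdvdn dvd_rfl
    have : i = 1 := Nat.dvd_one.mp (hg ▸ h1)
    omega
  have hi0 : (i : ZMod n) ≠ 0 := by
    intro h
    have := (ZMod.natCast_eq_zero_iff i n).mp h
    have := Nat.le_of_dvd hi this
    omega
  set J := n / 2 with hJ
  intro a
  ext x
  simp only [Set.mem_inter_iff, SimpleGraph.mem_neighborSet, Set.mem_singleton_iff]
  have hadj : ∀ u v : ZMod n,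
      (circulant n (i : ZMod n) ((J : ℕ) : ZMod n)).Adj u v ↔
        (u ≠ v ∧ (u - v = (i : ZMod n) ∨ u - v = -(i : ZMod n) ∨
          u - v = ((J : ℕ) : ZMod n) ∨ u - v = -((J : ℕ) : ZMod n))) :=
    fun _ _ => Iff.rfl
  rw [hadj, hadj]
  constructor
  · rintro ⟨⟨hne1, h1⟩, ⟨hne2, h2⟩⟩
    rcases h1 with h1 | h1 | h1 | h1 <;> rcases h2 with h2 | h2 | h2 | h2 <;>
      first
      | linear_combination -h1
      | exact absurd (contra' n hn (-(2*(i:ℤ)))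
          (by push_cast; linear_combination h1 - h2)
          (by omega) (by omega) (by omega) (by omega) (by omega)) not_false
      | exact absurd (contra' n hn (-(4*(i:ℤ)))
          (by push_cast; linear_combination h1 - h2)
          (by omega) (by omega) (by omega) (by omega) (by omega)) not_false
      | exact absurd (contra' n hn ((J : ℤ) - 3*(i:ℤ))
          (by push_cast; linear_combination h1 - h2)
          (by omega) (by omega) (by omega) (by omega) (by omega)) not_false
      | exact absurd (contra' n hn (-((J : ℤ) + 3*(i:ℤ)))
          (by push_cast; linear_combination h1 - h2)
          (by omega) (by omega) (by omega) (by omega) (by omega)) not_false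
      | exact absurd (contra' n hn ((J : ℤ) - (i:ℤ))
          (by push_cast; linear_combination h1 - h2)
          (by omega) (by omega) (by omega) (by omega) (by omega)) not_false
      | exact absurd (contra' n hn (-((J : ℤ) + (i:ℤ)))
          (by push_cast; linear_combination h1 - h2)
          (by omega) (by omega) (by omega) (by omega) (by omega)) not_false
      | exact absurd (contra' n hn (2*(J : ℤ) - 2*(i:ℤ))
          (by push_cast; linear_combination h1 - h2)
          (by omega) (by omega) (by omega) (by omega) (by omega)) not_false
      | exact absurd (contra' n hn (-(2*(J : ℤ) + 2*(i:ℤ)))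
          (by push_cast; linear_combination h1 - h2)
          (by omega) (by omega) (by omega) (by omega) (by omega)) not_false
  · rintro rfl
    refine ⟨⟨fun h => hi0 (by linear_combination -h), Or.inr (Or.inl (by ring))⟩,
      ⟨fun h => hi0 (by linear_combination h), Or.inl (by ring)⟩⟩
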